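/- Let P be a Borel probability measure on ℝ^{k×m} such that for every S ⊆ {1,…,m} with P[colsupp(W) = S] > 0 and every nonzero a ∈ ℝ^m with supp(a) ⊆ S, P[{W : W a = 0} ∩ {colsupp(W) = S}] = 0. Let L ∈ ℝ^{m×m} and set N_j := {i ∈ {1,…,m} : L_{ij} ≠ 0} for each j. Then ∫ ‖W L‖_{2,0} dP(W) = Σ_{j=1}^m P[colsupp(W) ∩ N_j ≠ ∅]; in particular (taking L = I), ∫ ‖W‖_{2,0} dP(W) = Σ_{j=1}^m P[j ∈ colsupp(W)]. -/

import Mathlib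

open MeasureTheory
open scoped ENNReal BigOperators

/-- Matrices over `ℝ` carry the Borel σ-algebra of their (product) topology. -/
noncomputable instance matrixMeasurableSpace {k m : ℕ} :
    MeasurableSpace (Matrix (Fin k) (Fin m) ℝ) := borel _

instance matrixBorelSpace {k m : ℕ} : BorelSpace (Matrix (Fin k) (Fin m) ℝ) := ⟨rfl⟩

/-- The column support of a matrix: indices of its nonzero columns. -/
def colSupp {k m : ℕ} (W : Matrix (Fin k) (Fin m) ℝ) : Set (Fin m) :=
  {j | ∃ i, W i j ≠ 0}

/-- The column sparsity `‖A‖_{2,0}`: the number of nonzero columns. -/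
noncomputable def colSparsity {k m : ℕ} (W : Matrix (Fin k) (Fin m) ℝ) : ℕ :=
  (colSupp W).ncard

lemma measurable_entry {k m : ℕ} (i : Fin k) (j : Fin m) :
    Measurable fun W : Matrix (Fin k) (Fin m) ℝ => W i j := by
  have h : Continuous fun W : Matrix (Fin k) (Fin m) ℝ => W i j :=
    (continuous_apply j).comp (continuous_apply i)
  exact h.measurable

lemma measurable_mul_entry {k m : ℕ} (L : Matrix (Fin m) (Fin m) ℝ) (i : Fin k) (j : Fin m) :
    Measurable fun W : Matrix (Fin k) (Fin m) ℝ => (W * L) i j := by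
  simp only [Matrix.mul_apply]
  exact Finset.measurable_sum Finset.univ
    (fun l _ => (measurable_entry i l).mul_const (L l j))

lemma colSparsity_cast_eq_sum {k m : ℕ} (A : Matrix (Fin k) (Fin m) ℝ) :
    (colSparsity A : ℝ≥0∞)
      = ∑ j : Fin m, Set.indicator {V : Matrix (Fin k) (Fin m) ℝ | j ∈ colSupp V}
          (fun _ => (1 : ℝ≥0∞)) A := by
  classical
  have h1 : (colSupp A).ncard = (Finset.univ.filter (fun j => j ∈ colSupp A)).card := by
    rw [← Set.ncard_coe_finset]; congr 1; ext j; simp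
  rw [colSparsity, h1, Finset.card_filter, Nat.cast_sum]
  refine Finset.sum_congr rfl fun j _ => ?_
  by_cases hj : j ∈ colSupp A <;> simp [Set.indicator_apply, hj]

lemma key {k m : ℕ}
    (P : Measure (Matrix (Fin k) (Fin m) ℝ)) [IsProbabilityMeasure P]
    (hA6 : ∀ S : Set (Fin m), 0 < P {W | colSupp W = S} →
      ∀ a : Fin m → ℝ, a ≠ 0 → {j | a j ≠ 0} ⊆ S →
        P ({W | W.mulVec a = 0} ∩ {W | colSupp W = S}) = 0)
    (L : Matrix (Fin m) (Fin m) ℝ)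
    (N : Fin m → Set (Fin m)) (hN : ∀ j, N j = {i | L i j ≠ 0}) :
    (∫⁻ W, (colSparsity (W * L) : ℝ≥0∞) ∂P) =
        ∑ j : Fin m, P {W | colSupp W ∩ N j ≠ ∅} := by
  classical
  set A : Fin m → Set (Matrix (Fin k) (Fin m) ℝ) :=
    fun j => {W | j ∈ colSupp (W * L)} with hA
  have hAmeas : ∀ j, MeasurableSet (A j) := by
    intro j
    have : A j = ⋃ i : Fin k, (fun W : Matrix (Fin k) (Fin m) ℝ => (W * L) i j) ⁻¹' ({0}ᶜ) := by
      ext W; simp [hA, colSupp]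
    rw [this]
    exact MeasurableSet.iUnion fun i =>
      (measurable_mul_entry L i j) (measurableSet_singleton 0).compl
  have hint : (∫⁻ W, (colSparsity (W * L) : ℝ≥0∞) ∂P) = ∑ j : Fin m, P (A j) := by
    have h1 : (∫⁻ W, (colSparsity (W * L) : ℝ≥0∞) ∂P)
        = ∫⁻ W, ∑ j : Fin m, (A j).indicator (fun _ => (1 : ℝ≥0∞)) W ∂P := by
      congr 1; funext W
      rw [colSparsity_cast_eq_sum]
      refine Finset.sum_congr rfl fun j _ => ?_
      by_cases h : j ∈ colSupp (W * L) <;> simp [Set.indicator_apply, hA, h]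
    rw [h1, lintegral_finset_sum _ (fun j _ => (measurable_const.indicator (hAmeas j)))]
    congr 1; funext j
    rw [lintegral_indicator (hAmeas j)]
    simp
  rw [hint]
  congr 1; funext j
  -- A j ⊆ B j
  set B : Set (Matrix (Fin k) (Fin m) ℝ) := {W | colSupp W ∩ N j ≠ ∅} with hB
  have hsub : A j ⊆ B := by
    intro W hW
    obtain ⟨i, hi⟩ := hW
    rw [Matrix.mul_apply] at hi
    obtain ⟨l, _, hl⟩ := Finset.exists_ne_zero_of_sum_ne_zero hi
    have hW1 : W i l ≠ 0 := fun h => hl (by simp [h])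
    have hL1 : L l j ≠ 0 := fun h => hl (by simp [h])
    intro hemp
    have : l ∈ colSupp W ∩ N j := ⟨⟨i, hW1⟩, by rw [hN]; exact hL1⟩
    rw [hemp] at this; exact this
  -- bad set is null
  have hnull : P (B \ A j) = 0 := by
    have hcover : B \ A j ⊆ ⋃ S : Set (Fin m), ((B \ A j) ∩ {W | colSupp W = S}) := by
      intro W hW
      exact Set.mem_iUnion.2 ⟨colSupp W, hW, rfl⟩
    refine measure_mono_null hcover (measure_iUnion_null fun S => ?_)
    by_cases hSN : (S ∩ N j) = ∅
    · have : (B \ A j) ∩ {W | colSupp W = S} = ∅ := by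
        ext W
        simp only [Set.mem_inter_iff, Set.mem_diff, Set.mem_setOf_eq, Set.mem_empty_iff_false,
          iff_false, not_and, and_imp]
        intro hWB _ hWS
        exact absurd (by rw [hWS]; exact hSN) hWB
      rw [this]; exact measure_empty
    · set a : Fin m → ℝ := fun l => if l ∈ S then L l j else 0 with ha
      obtain ⟨l0, hl0S, hl0N⟩ := Set.nonempty_iff_ne_empty.2 hSN
      have hl0L : L l0 j ≠ 0 := by rw [hN] at hl0N; exact hl0N
      have hane : a ≠ 0 := by
        intro h
        have := congrFun h l0
        simp [ha, hl0S] at this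
        exact hl0L this
      have hasupp : {l | a l ≠ 0} ⊆ S := by
        intro l hl
        by_contra hls
        simp [ha, hls] at hl
      have hsub2 : (B \ A j) ∩ {W | colSupp W = S}
          ⊆ {W | W.mulVec a = 0} ∩ {W | colSupp W = S} := by
        rintro W ⟨⟨_, hWA⟩, hWS⟩
        refine ⟨?_, hWS⟩
        funext i
        have hzero : ∀ i', (W * L) i' j = 0 := by
          intro i'
          by_contra h
          exact hWA ⟨i', h⟩
        have : W.mulVec a i = (W * L) i j := by
          rw [Matrix.mulVec, dotProduct, Matrix.mul_apply]
          refine Finset.sum_congr rfl fun l _ => ?_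
          by_cases hls : l ∈ S
          · simp [ha, hls]
          · have : W i l = 0 := by
              by_contra h
              exact hls (by rw [← hWS]; exact ⟨i, h⟩)
            simp [this]
        rw [this, hzero]; rfl
      refine measure_mono_null hsub2 ?_
      by_cases hpos : 0 < P {W | colSupp W = S}
      · exact hA6 S hpos a hane hasupp
      · have h0 : P {W | colSupp W = S} = 0 := by
          simpa using (not_lt.mp hpos)
        exact le_antisymm (h0 ▸ measure_mono Set.inter_subset_right) zero_le
  refine le_antisymm (measure_mono hsub) ?_
  calc P B ≤ P (A j ∪ (B \ A j)) := measure_mono (fun W hW => by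
        by_cases h : W ∈ A j
        · exact Or.inl h
        · exact Or.inr ⟨hW, h⟩)
    _ ≤ P (A j) + P (B \ A j) := measure_union_le _ _
    _ = P (A j) := by rw [hnull, add_zero]

/-- **Expected column sparsity after right multiplication.**
If `P` is a Borel probability measure on `ℝ^{k×m}` satisfying the intra-support
sufficient task variability assumption, and `N j` is the support of the `j`-th column
of `L`, then `∫ ‖W L‖_{2,0} dP(W) = ∑ⱼ P[colsupp W ∩ N j ≠ ∅]`; in particular (the case
`L = I`), `∫ ‖W‖_{2,0} dP(W) = ∑ⱼ P[j ∈ colsupp W]`. -/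
theorem expected_colSparsity_mul {k m : ℕ}
    (P : Measure (Matrix (Fin k) (Fin m) ℝ)) [IsProbabilityMeasure P]
    (hA6 : ∀ S : Set (Fin m), 0 < P {W | colSupp W = S} →
      ∀ a : Fin m → ℝ, a ≠ 0 → {j | a j ≠ 0} ⊆ S →
        P ({W | W.mulVec a = 0} ∩ {W | colSupp W = S}) = 0)
    (L : Matrix (Fin m) (Fin m) ℝ)
    (N : Fin m → Set (Fin m)) (hN : ∀ j, N j = {i | L i j ≠ 0}) :
    (∫⁻ W, (colSparsity (W * L) : ℝ≥0∞) ∂P) =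
        ∑ j : Fin m, P {W | colSupp W ∩ N j ≠ ∅} ∧
    (∫⁻ W, (colSparsity W : ℝ≥0∞) ∂P) =
        ∑ j : Fin m, P {W | j ∈ colSupp W} := by
  constructor
  · exact key P hA6 L N hN
  · have h := key P hA6 1 (fun j => {j}) (fun j => by
      ext i; simp [Matrix.one_apply])
    simp only [Matrix.mul_one] at h
    rw [h]
    congr 1; funext j
    congr 1
    ext W
    simp [Set.inter_singleton_eq_empty]
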